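/- Let T be an ℵ₁-tree. Then T with the fine wedge topology is Lindelöf if and only if every finitely splitting subtree of T of height ω₁ is countable (equivalently: every downward-closed subset S ⊆ T in which each point has only finitely many immediate successors within S is countable). -/

import Mathlib

universe u

/-- A partial order is a tree if the set of strict predecessors of every point
is well-ordered by `<`. -/
def IsTree (T : Type u) [PartialOrder T] : Prop :=
  ∀ x : T, IsWellOrder {y : T // y < x} (fun a b => (a : T) < (b : T))

/-- The height of a node of a tree: the order type of its set of strict predecessors. -/
noncomputable def nodeHeight {T : Type u} [PartialOrder T] (hT : IsTree T) (x : T) :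
    Ordinal.{u} :=
  letI := hT x
  Ordinal.type (fun a b : {y : T // y < x} => (a : T) < (b : T))

/-- A `κ`-tree: a tree of height `κ` all of whose levels have size `< κ`. -/
def IsKTree {T : Type u} [PartialOrder T] (hT : IsTree T) (κ : Cardinal.{u}) : Prop :=
  (∀ x : T, nodeHeight hT x < κ.ord) ∧
  (∀ o : Ordinal.{u}, o < κ.ord → ∃ x : T, nodeHeight hT x = o) ∧
  (∀ o : Ordinal.{u}, Cardinal.mk {x : T | nodeHeight hT x = o} < κ)

/-- The fine wedge topology on a tree: generated by the cones `↑t = Set.Ici t`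
and their complements. -/
def fineWedge (T : Type u) [PartialOrder T] : TopologicalSpace T :=
  TopologicalSpace.generateFrom
    ({s | ∃ t : T, s = Set.Ici t} ∪ {s | ∃ t : T, s = (Set.Ici t)ᶜ})

section Helpers

variable {T : Type u} [PartialOrder T]

/-- Two elements with a common upper bound in a tree are comparable. -/
lemma IsTree.comp (hT : IsTree T) {u v y : T} (hu : u ≤ y) (hv : v ≤ y) :
    u ≤ v ∨ v ≤ u := by
  rcases hu.lt_or_eq with hu' | hu'
  · rcases hv.lt_or_eq with hv' | hv'
    · letI := hT y
      rcases trichotomous_of (fun a b : {z : T // z < y} => (a : T) < (b : T))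
        ⟨u, hu'⟩ ⟨v, hv'⟩ with h | h | h
      · exact Or.inl h.le
      · exact Or.inl (le_of_eq (congrArg Subtype.val h))
      · exact Or.inr h.le
    · exact Or.inl (by rw [hv']; exact hu)
  · exact Or.inr (by rw [hu']; exact hv)

/-- A nonempty set of elements below a fixed element has a minimum. -/
lemma IsTree.exists_min (hT : IsTree T) {y : T} {s : Set T} (hs : ∀ w ∈ s, w ≤ y)
    (hne : s.Nonempty) : ∃ m ∈ s, ∀ w ∈ s, m ≤ w := by
  classical
  letI := hT y
  by_cases h : ∃ w ∈ s, w < y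
  · obtain ⟨w0, hw0s, hw0⟩ := h
    have hwf : WellFounded (fun a b : {z : T // z < y} => (a : T) < (b : T)) :=
      IsWellFounded.wf
    obtain ⟨m, hm, hmin⟩ := hwf.has_min {w : {z : T // z < y} | w.val ∈ s}
      ⟨⟨w0, hw0⟩, hw0s⟩
    refine ⟨m.val, hm, fun w hw => ?_⟩
    rcases hT.comp (hs _ hm) (hs _ hw) with h1 | h1
    · exact h1
    · rcases h1.lt_or_eq with h2 | h2
      · exact ((hmin ⟨w, h2.trans m.2⟩ hw) h2).elim
      · exact le_of_eq h2.symm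
  · push_neg at h
    obtain ⟨w0, hw0⟩ := hne
    have key : ∀ w ∈ s, w = y := fun w hw => ((hs w hw).lt_or_eq).resolve_left (h w hw)
    exact ⟨w0, hw0, fun w hw => by rw [key w0 hw0, key w hw]⟩

/-- In the fine wedge topology, every point of an open set has a basic neighborhood
of the form `Ici x` minus finitely many cones above `x`. -/
lemma fineWedge_nbhd (hT : IsTree T) {U : Set T}
    (hU : (fineWedge T).IsOpen U) :
    ∀ x ∈ U, ∃ F : Set T, F.Finite ∧ (∀ s ∈ F, x < s) ∧
      Set.Ici x ∩ (⋂ s ∈ F, (Set.Ici s)ᶜ) ⊆ U := by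
  have hU' : TopologicalSpace.GenerateOpen
      ({s | ∃ t : T, s = Set.Ici t} ∪ {s | ∃ t : T, s = (Set.Ici t)ᶜ}) U := hU
  clear hU
  induction hU' with
  | basic s hs =>
      intro x hx
      rcases hs with ⟨t, rfl⟩ | ⟨t, rfl⟩
      · exact ⟨∅, Set.finite_empty, by simp, fun y hy => le_trans hx hy.1⟩
      · by_cases hxt : x < t
        · refine ⟨{t}, Set.finite_singleton t, by simpa using hxt, ?_⟩
          intro y hy
          exact Set.mem_iInter₂.1 hy.2 t rfl
        · refine ⟨∅, Set.finite_empty, by simp, ?_⟩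
          intro y hy hty
          rcases hT.comp hty hy.1 with h | h
          · exact hx h
          · exact hxt (h.lt_of_ne fun e => hx (le_of_eq e.symm))
  | univ => exact fun x _ => ⟨∅, Set.finite_empty, by simp, fun y _ => trivial⟩
  | inter s t _ _ ihs iht =>
      intro x hx
      obtain ⟨F1, h1f, h1gt, h1sub⟩ := ihs x hx.1
      obtain ⟨F2, h2f, h2gt, h2sub⟩ := iht x hx.2
      refine ⟨F1 ∪ F2, h1f.union h2f, fun s' hs' => hs'.elim (h1gt s') (h2gt s'), ?_⟩
      intro y hy
      obtain ⟨hyx, hyI⟩ := hy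
      rw [Set.mem_iInter₂] at hyI
      exact ⟨h1sub ⟨hyx, Set.mem_iInter₂.2 fun i hi => hyI i (Or.inl hi)⟩,
             h2sub ⟨hyx, Set.mem_iInter₂.2 fun i hi => hyI i (Or.inr hi)⟩⟩
  | sUnion S _ ih =>
      intro x hx
      obtain ⟨s, hsS, hxs⟩ := hx
      obtain ⟨F, hf, hgt, hsub⟩ := ih s hsS x hxs
      exact ⟨F, hf, hgt, hsub.trans (Set.subset_sUnion_of_mem hsS)⟩

lemma fineWedge_isOpen_Ici (t : T) : (fineWedge T).IsOpen (Set.Ici t) :=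
  TopologicalSpace.GenerateOpen.basic _ (Or.inl ⟨t, rfl⟩)

lemma fineWedge_isOpen_Ici_compl (t : T) : (fineWedge T).IsOpen (Set.Ici t)ᶜ :=
  TopologicalSpace.GenerateOpen.basic _ (Or.inr ⟨t, rfl⟩)

lemma nodeHeight_typein (hT : IsTree T) (z : T) (w : {v : T // v < z}) :
    (letI := hT z
     Ordinal.typein (fun a b : {v : T // v < z} => (a : T) < (b : T)) w)
      = nodeHeight hT w.val := by
  letI := hT z
  letI := hT w.val
  rw [← Ordinal.type_subrel]
  unfold nodeHeight
  let f : (fun a b : {y : T // y < w.val} => (a : T) < (b : T)) ≃r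
      (Subrel (fun a b : {v : T // v < z} => (a : T) < (b : T))
        {b : {v : T // v < z} | (b : T) < (w : {v : T // v < z}).val}) :=
    ⟨⟨fun u => ⟨⟨u.1, lt_trans u.2 w.2⟩, u.2⟩, fun b => ⟨b.1.1, b.2⟩,
      fun u => rfl, fun b => rfl⟩, Iff.rfl⟩
  haveI : IsWellOrder _ (Subrel (fun a b : {v : T // v < z} => (a : T) < (b : T))
      {b : {v : T // v < z} | (b : T) < (w : {v : T // v < z}).val}) :=
    Subrel.instIsWellOrderSubtype _ _
  exact (RelIso.ordinal_type_eq f).symm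

end Helpers

theorem stmt_17 (T : Type u) [PartialOrder T] (hT : IsTree T)
    (hK : IsKTree hT (Cardinal.aleph 1)) :
    -- `T` with the fine wedge topology is Lindelöf
    (∀ 𝒰 : Set (Set T), (∀ U ∈ 𝒰, (fineWedge T).IsOpen U) → ⋃₀ 𝒰 = Set.univ →
        ∃ 𝒰₀ ⊆ 𝒰, 𝒰₀.Countable ∧ ⋃₀ 𝒰₀ = Set.univ) ↔
    -- iff every downward-closed subset in which every point has finitely many
    -- immediate successors (within the subset) is countable
    (∀ S : Set T, (∀ x ∈ S, ∀ y : T, y ≤ x → y ∈ S) →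
        (∀ x ∈ S, {y ∈ S | x ⋖ y}.Finite) → S.Countable) := by
  classical
  constructor
  · -- Lindelöf → every finitely splitting subtree is countable
    intro hLin S hdc hfin
    by_contra hSc
    set D : T → Set T := fun t => {y ∈ S | t ⋖ y} with hD
    set V : T → Set T := fun t => Set.Ici t ∩ ⋂ s ∈ D t, (Set.Ici s)ᶜ with hV
    have hself : ∀ t : T, t ∈ V t := by
      intro t
      exact ⟨le_rfl, Set.mem_iInter₂.2 fun s hs hle => (hs.2.lt).not_ge hle⟩
    have key : ∀ t ∈ S, ∀ t' ∈ S, t ∈ V t' → t = t' := by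
      intro t ht t' ht' htV
      obtain ⟨ht1, ht2⟩ := htV
      rcases (ht1 : t' ≤ t).lt_or_eq with hlt | heq
      · exfalso
        obtain ⟨m, hm, hmin⟩ := hT.exists_min (y := t)
            (s := {z | t' < z ∧ z ≤ t}) (fun w hw => hw.2) ⟨t, hlt, le_rfl⟩
        have hmS : m ∈ S := hdc t ht m hm.2
        have hcov : t' ⋖ m :=
          ⟨hm.1, fun z hz1 hz2 => (hmin z ⟨hz1, hz2.le.trans hm.2⟩).not_gt hz2⟩
        exact Set.mem_iInter₂.1 ht2 m ⟨hmS, hcov⟩ hm.2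
      · exact heq.symm
    set 𝒰 : Set (Set T) := ((fun x => Set.Ici x) '' Sᶜ) ∪ ((fun t => V t) '' S) with h𝒰
    have hopen : ∀ U ∈ 𝒰, (fineWedge T).IsOpen U := by
      rintro U (⟨x, _, rfl⟩ | ⟨t, ht, rfl⟩)
      · exact fineWedge_isOpen_Ici x
      · letI : TopologicalSpace T := fineWedge T
        have h1 : IsOpen (Set.Ici t) := fineWedge_isOpen_Ici t
        have h2 : IsOpen (⋂ s ∈ D t, (Set.Ici s)ᶜ) :=
          (hfin t ht).isOpen_biInter fun s _ => fineWedge_isOpen_Ici_compl s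
        exact IsOpen.inter h1 h2
    have hcov : ⋃₀ 𝒰 = Set.univ := by
      apply Set.eq_univ_of_forall
      intro y
      by_cases hy : y ∈ S
      · exact Set.mem_sUnion.2 ⟨V y, Or.inr ⟨y, hy, rfl⟩, hself y⟩
      · exact Set.mem_sUnion.2 ⟨Set.Ici y, Or.inl ⟨y, hy, rfl⟩, le_rfl⟩
    obtain ⟨𝒰₀, hsub, hcnt, hcov₀⟩ := hLin 𝒰 hopen hcov
    have hmem : ∀ t ∈ S, V t ∈ 𝒰₀ := by
      intro t ht
      have hyt : t ∈ ⋃₀ 𝒰₀ := hcov₀ ▸ Set.mem_univ t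
      obtain ⟨W, hW𝒰₀, htW⟩ := hyt
      rcases hsub hW𝒰₀ with ⟨x, hx, rfl⟩ | ⟨t', ht', rfl⟩
      · exact absurd (hdc t ht x htW) hx
      · rwa [key t ht t' ht' htW]
    apply hSc
    have hinj : Set.InjOn V S := by
      intro t1 h1 t2 h2 e
      exact key t1 h1 t2 h2 (e ▸ hself t1)
    refine Set.countable_of_injective_of_countable_image hinj (hcnt.mono ?_)
    rintro _ ⟨t, ht, rfl⟩
    exact hmem t ht
  · -- converse
    intro hST 𝒰 hopen hcov
    set A : Set T := {x | ¬ ∃ 𝒱 ⊆ 𝒰, 𝒱.Countable ∧ Set.Ici x ⊆ ⋃₀ 𝒱} with hA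
    have hAdc : ∀ x ∈ A, ∀ y : T, y ≤ x → y ∈ A := by
      rintro x hx y hyx ⟨𝒱, h1, h2, h3⟩
      exact hx ⟨𝒱, h1, h2, fun z hz => h3 (hyx.trans hz)⟩
    have hUex : ∀ x : T, ∃ U ∈ 𝒰, x ∈ U := by
      intro x
      obtain ⟨U, h1, h2⟩ := Set.mem_sUnion.1 (hcov ▸ Set.mem_univ x)
      exact ⟨U, h1, h2⟩
    choose Uc hUc𝒰 hxUc using hUex
    have hnb := fun x => fineWedge_nbhd hT (hopen _ (hUc𝒰 x)) x (hxUc x)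
    choose F hFfin hFgt hFsub using hnb
    have hself : ∀ x : T, x ∈ Set.Ici x ∩ ⋂ s ∈ F x, (Set.Ici s)ᶜ := by
      intro x
      exact ⟨le_rfl, Set.mem_iInter₂.2 fun s hs hle => (hFgt x s hs).not_ge hle⟩
    have hIci : ∀ x : T, Set.Ici x ⊆ Uc x ∪ ⋃ s ∈ F x, Set.Ici s := by
      intro x y hy
      by_cases h : ∃ s ∈ F x, s ≤ y
      · obtain ⟨s, hs1, hs2⟩ := h
        exact Set.mem_union_right _ (Set.mem_biUnion hs1 hs2)
      · push_neg at h
        exact Set.mem_union_left _ (hFsub x ⟨hy, Set.mem_iInter₂.2 fun s hs => h s hs⟩)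
    -- A is finitely splitting
    have hAfin : ∀ x ∈ A, {y ∈ A | x ⋖ y}.Finite := by
      intro x hxA
      have hmap : ∀ z ∈ {y ∈ A | x ⋖ y}, ∃ s ∈ F x, z ≤ s := by
        rintro z ⟨hzA, hzc⟩
        by_contra hno
        push_neg at hno
        apply hzA
        refine ⟨{Uc x}, by simpa using hUc𝒰 x, Set.countable_singleton _, ?_⟩
        intro y hy
        rw [Set.sUnion_singleton]
        rcases hIci x (le_of_lt (lt_of_lt_of_le hzc.lt hy)) with h | h
        · exact h
        · exfalso
          obtain ⟨s, hs, hsy⟩ := Set.mem_iUnion₂.1 h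
          rcases hT.comp (hsy : s ≤ y) (hy : z ≤ y) with h1 | h1
          · rcases h1.lt_or_eq with h2 | h2
            · exact hzc.2 (hFgt x s hs) h2
            · exact (hno s hs) (le_of_eq h2.symm)
          · exact (hno s hs) h1
      set f : T → T := fun z =>
        if h : ∃ s ∈ F x, z ≤ s then h.choose else z with hf
      have hfmem : ∀ z ∈ {y ∈ A | x ⋖ y}, f z ∈ F x ∧ z ≤ f z := by
        intro z hz
        have hm := hmap z hz
        rw [hf]
        simp only [dif_pos hm]
        exact ⟨hm.choose_spec.1, hm.choose_spec.2⟩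
      refine Set.Finite.of_finite_image (f := f) ((hFfin x).subset ?_) ?_
      · rintro _ ⟨z, hz, rfl⟩
        exact (hfmem z hz).1
      · intro z1 h1 z2 h2 e
        rcases hT.comp (hfmem z1 h1).2 (e ▸ (hfmem z2 h2).2) with h | h
        · rcases h.lt_or_eq with h' | h'
          · exact absurd h' (h2.2.2 h1.2.lt)
          · exact h'
        · rcases h.lt_or_eq with h' | h'
          · exact absurd h' (h1.2.2 h2.2.lt)
          · exact h'.symm
    have hAc : A.Countable := hST A hAdc hAfin
    haveI := hAc.to_subtype
    set δ : Ordinal.{u} := ⨆ a : A, nodeHeight hT a.1 with hδ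
    have hδlt : δ < (Cardinal.aleph 1).ord := by
      apply Ordinal.iSup_lt_ord
      · rw [Cardinal.isRegular_aleph_one.cof_eq]
        exact lt_of_le_of_lt Cardinal.mk_le_aleph0 Cardinal.aleph0_lt_aleph_one
      · exact fun a => hK.1 a.1
    have hδA : ∀ a ∈ A, nodeHeight hT a ≤ δ := fun a ha =>
      Ordinal.le_iSup (fun a : A => nodeHeight hT a.1) (⟨a, ha⟩ : A)
    set E : Set T := {z | z ∉ A ∧ ∀ w : T, w < z → w ∈ A} with hE
    have hEbd : ∀ z ∈ E, nodeHeight hT z ≤ δ + 1 := by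
      intro z hz
      by_contra hlt
      push_neg at hlt
      letI := hT z
      have hlt' : δ + 1 < Ordinal.type
          (fun a b : {v : T // v < z} => (a : T) < (b : T)) := hlt
      obtain ⟨w, hw⟩ := Ordinal.typein_surj
        (fun a b : {v : T // v < z} => (a : T) < (b : T)) hlt'
      have heq : nodeHeight hT w.val = δ + 1 := by
        rw [← nodeHeight_typein hT z w, hw]
      have h1 : nodeHeight hT w.val ≤ δ := hδA _ (hz.2 w.val w.2)
      rw [heq] at h1
      exact (Order.lt_succ δ).not_ge (Ordinal.add_one_eq_succ δ ▸ h1)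
    have hlim : Order.IsSuccLimit ((Cardinal.aleph 1).ord) :=
      Cardinal.isSuccLimit_ord (Cardinal.aleph0_le_aleph 1)
    have hδ2 : Order.succ (δ + 1) < (Cardinal.aleph 1).ord :=
      hlim.succ_lt (Ordinal.add_one_eq_succ δ ▸ hlim.succ_lt hδlt)
    have hEc : E.Countable := by
      have hsub : E ⊆ ⋃ o ∈ Set.Iic (δ + 1), {x : T | nodeHeight hT x = o} := by
        intro z hz
        exact Set.mem_biUnion (hEbd z hz) rfl
      refine Set.Countable.mono hsub (Set.Countable.biUnion ?_ ?_)
      · rw [Cardinal.countable_iff_lt_aleph_one, ← Order.Iio_succ,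
          Ordinal.mk_Iio_ordinal]
        have hcard : (Order.succ (δ + 1)).card < Cardinal.aleph 1 :=
          Cardinal.lt_ord.1 hδ2
        calc Cardinal.lift.{u+1} (Order.succ (δ + 1)).card
            < Cardinal.lift.{u+1} (Cardinal.aleph 1) := Cardinal.lift_lt.2 hcard
          _ = Cardinal.aleph 1 := by
              rw [Cardinal.lift_aleph, Ordinal.lift_one]
      · intro o _
        exact (Cardinal.countable_iff_lt_aleph_one _).2 (hK.2.2 o)
    have h𝒱 : ∀ z : T, ∃ 𝒱 : Set (Set T), 𝒱 ⊆ 𝒰 ∧ 𝒱.Countable ∧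
        (z ∉ A → Set.Ici z ⊆ ⋃₀ 𝒱) := by
      intro z
      by_cases hz : z ∈ A
      · exact ⟨∅, Set.empty_subset _, Set.countable_empty, fun h => absurd hz h⟩
      · have hz' : ∃ 𝒱 ⊆ 𝒰, 𝒱.Countable ∧ Set.Ici z ⊆ ⋃₀ 𝒱 := not_not.1 hz
        obtain ⟨𝒱, h1, h2, h3⟩ := hz'
        exact ⟨𝒱, h1, h2, fun _ => h3⟩
    choose 𝒱 h𝒱1 h𝒱2 h𝒱3 using h𝒱
    refine ⟨(fun x => Uc x) '' A ∪ ⋃ z ∈ E, 𝒱 z, ?_, ?_, ?_⟩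
    · rintro W (⟨x, _, rfl⟩ | hW)
      · exact hUc𝒰 x
      · obtain ⟨z, -, hzW⟩ := Set.mem_iUnion₂.1 hW
        exact h𝒱1 z hzW
    · exact (hAc.image _).union (hEc.biUnion fun z _ => h𝒱2 z)
    · apply Set.eq_univ_of_forall
      intro y
      by_cases hy : y ∈ A
      · exact Set.mem_sUnion.2 ⟨Uc y, Or.inl ⟨y, hy, rfl⟩, hFsub y (hself y)⟩
      · obtain ⟨m, hm, hmin⟩ := hT.exists_min (y := y) (s := {w | w ≤ y ∧ w ∉ A})
          (fun w hw => hw.1) ⟨y, le_rfl, hy⟩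
        have hmE : m ∈ E := by
          refine ⟨hm.2, fun w hw => ?_⟩
          by_contra hwA
          exact (hmin w ⟨hw.le.trans hm.1, hwA⟩).not_gt hw
        obtain ⟨W, hW, hyW⟩ := Set.mem_sUnion.1 (h𝒱3 m hm.2 hm.1)
        exact Set.mem_sUnion.2 ⟨W, Or.inr (Set.mem_biUnion hmE hW), hyW⟩
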